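/- Let K : [0,T]×[0,T] → ℝ be continuous with K(t,t) = 1 for all t, K continuously differentiable in its first argument, and f continuously differentiable with f(0) = 0. Then the Volterra integral equation of the first kind ∫₀ᵗ K(t,τ) x(τ) dτ = f(t), t ∈ [0,T], has at most one continuous solution x on [0,T]. -/
import Mathlib


open intervalIntegral Set MeasureTheory

/-- Triangular Fubini swap: for continuous `F`,
`∫_0^t ∫_τ^t F(s,τ) ds dτ = ∫_0^t ∫_0^s F(s,τ) dτ ds`. -/
lemma volterra_tri_swap (F : ℝ → ℝ → ℝ) (hF : Continuous fun p : ℝ × ℝ => F p.1 p.2)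
    (t : ℝ) (ht : 0 ≤ t) :
    (∫ τ in (0:ℝ)..t, ∫ s in τ..t, F s τ) = ∫ s in (0:ℝ)..t, ∫ τ in (0:ℝ)..s, F s τ := by
  set μ := MeasureTheory.volume.restrict (Ioc (0:ℝ) t) with hμ
  have hfin : IsFiniteMeasure μ := by
    constructor
    rw [hμ, Measure.restrict_apply_univ, Real.volume_Ioc]
    exact ENNReal.ofReal_lt_top
  set G : ℝ × ℝ → ℝ := fun p => if p.2 < p.1 then F p.1 p.2 else 0 with hGdef
  have hGm : Measurable G :=
    Measurable.ite (measurableSet_lt measurable_snd measurable_fst)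
      hF.measurable measurable_const
  obtain ⟨C, hC⟩ := (isCompact_Icc.prod isCompact_Icc :
      IsCompact (Icc (0:ℝ) t ×ˢ Icc (0:ℝ) t)).exists_bound_of_continuousOn hF.continuousOn
  have hCnn : 0 ≤ C := le_trans (norm_nonneg _) (hC (0, 0) ⟨⟨le_rfl, ht⟩, le_rfl, ht⟩)
  have hint : Integrable (fun p : ℝ × ℝ => G (p.2, p.1)) (μ.prod μ) := by
    refine Integrable.mono' (integrable_const C)
      ((hGm.comp measurable_swap).aestronglyMeasurable) ?_
    rw [hμ, Measure.prod_restrict]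
    filter_upwards [MeasureTheory.ae_restrict_mem (measurableSet_Ioc.prod measurableSet_Ioc)]
      with p hp
    rcases hp with ⟨hp1, hp2⟩
    by_cases h : p.1 < p.2
    · simp only [hGdef, h, if_pos]
      exact hC (p.2, p.1) ⟨Ioc_subset_Icc_self hp2, Ioc_subset_Icc_self hp1⟩
    · simp only [hGdef, h, if_neg, not_false_iff, norm_zero]
      exact hCnn
  have hswap : (∫ τ, (∫ s, G (s, τ) ∂μ) ∂μ) = ∫ s, (∫ τ, G (s, τ) ∂μ) ∂μ :=
    MeasureTheory.integral_integral_swap (f := fun τ s => G (s, τ)) hint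
  have hL : (∫ τ in (0:ℝ)..t, ∫ s in τ..t, F s τ) = ∫ τ, (∫ s, G (s, τ) ∂μ) ∂μ := by
    rw [intervalIntegral.integral_of_le ht]
    apply MeasureTheory.setIntegral_congr_fun measurableSet_Ioc
    intro τ hτ
    show (∫ s in τ..t, F s τ) = ∫ s, G (s, τ) ∂μ
    have h1 : (∫ s, G (s, τ) ∂μ) = ∫ s in Ioc (0:ℝ) t, (Ioi τ).indicator (fun s => F s τ) s := by
      apply MeasureTheory.setIntegral_congr_fun measurableSet_Ioc
      intro s _
      simp [hGdef, Set.indicator_apply, mem_Ioi]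
    rw [intervalIntegral.integral_of_le hτ.2, h1,
      MeasureTheory.setIntegral_indicator measurableSet_Ioi]
    congr 1
    rw [Set.Ioc_inter_Ioi, sup_eq_right.2 hτ.1.le]
  have hR : (∫ s in (0:ℝ)..t, ∫ τ in (0:ℝ)..s, F s τ) = ∫ s, (∫ τ, G (s, τ) ∂μ) ∂μ := by
    rw [intervalIntegral.integral_of_le ht]
    apply MeasureTheory.setIntegral_congr_fun measurableSet_Ioc
    intro s hs
    show (∫ τ in (0:ℝ)..s, F s τ) = ∫ τ, G (s, τ) ∂μ
    have h1 : (∫ τ, G (s, τ) ∂μ) = ∫ τ in Ioc (0:ℝ) t, (Iio s).indicator (fun τ => F s τ) τ := by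
      apply MeasureTheory.setIntegral_congr_fun measurableSet_Ioc
      intro τ _
      simp [hGdef, Set.indicator_apply, mem_Iio]
    have h2 : Ioc (0:ℝ) t ∩ Iio s = Ioo 0 s := by
      ext τ
      simp only [mem_inter_iff, mem_Ioc, mem_Iio, mem_Ioo]
      constructor
      · rintro ⟨⟨h1', _⟩, h3⟩; exact ⟨h1', h3⟩
      · rintro ⟨h1', h3⟩; exact ⟨⟨h1', h3.le.trans hs.2⟩, h3⟩
    rw [h1, MeasureTheory.setIntegral_indicator measurableSet_Iio, h2,
      intervalIntegral.integral_of_le hs.1.le, MeasureTheory.integral_Ioc_eq_integral_Ioo]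
  rw [hL, hR, hswap]

theorem volterra_first_kind_uniqueness
    (T : ℝ) (hT : 0 < T)
    (K K' : ℝ → ℝ → ℝ) (f f' : ℝ → ℝ)
    (hK : ContinuousOn (fun p : ℝ × ℝ => K p.1 p.2) (Icc 0 T ×ˢ Icc 0 T))
    (hKdiag : ∀ t ∈ Icc (0:ℝ) T, K t t = 1)
    (hK' : ContinuousOn (fun p : ℝ × ℝ => K' p.1 p.2) (Icc 0 T ×ˢ Icc 0 T))
    (hKderiv : ∀ t ∈ Icc (0:ℝ) T, ∀ τ ∈ Icc (0:ℝ) T,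
      HasDerivAt (fun s => K s τ) (K' t τ) t)
    (hf' : ContinuousOn f' (Icc 0 T))
    (hfderiv : ∀ t ∈ Icc (0:ℝ) T, HasDerivAt f (f' t) t)
    (hf0 : f 0 = 0)
    (x₁ x₂ : ℝ → ℝ)
    (hx₁ : ContinuousOn x₁ (Icc 0 T)) (hx₂ : ContinuousOn x₂ (Icc 0 T))
    (hsol₁ : ∀ t ∈ Icc (0:ℝ) T, ∫ τ in (0:ℝ)..t, K t τ * x₁ τ = f t)
    (hsol₂ : ∀ t ∈ Icc (0:ℝ) T, ∫ τ in (0:ℝ)..t, K t τ * x₂ τ = f t) :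
    ∀ t ∈ Icc (0:ℝ) T, x₁ t = x₂ t := by
  -- clamp function onto `[0, T]`
  set c : ℝ → ℝ := fun s => max 0 (min s T) with hcdef
  have hc_cont : Continuous c := continuous_const.max (continuous_id.min continuous_const)
  have hc_mem : ∀ s, c s ∈ Icc (0:ℝ) T :=
    fun s => ⟨le_max_left _ _, max_le hT.le (min_le_right _ _)⟩
  have hc_eq : ∀ s ∈ Icc (0:ℝ) T, c s = s := by
    intro s hs
    simp [hcdef, min_eq_left hs.2, max_eq_right hs.1]
  -- the difference, extended continuously to all of `ℝ`
  set g : ℝ → ℝ := fun τ => x₁ (c τ) - x₂ (c τ) with hgdef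
  have hg_cont : Continuous g :=
    (hx₁.comp_continuous hc_cont hc_mem).sub (hx₂.comp_continuous hc_cont hc_mem)
  -- the kernel derivative, extended continuously to all of `ℝ²`
  set B : ℝ → ℝ → ℝ := fun s τ => K' (c s) (c τ) with hBdef
  have hB_cont : Continuous fun p : ℝ × ℝ => B p.1 p.2 := by
    apply hK'.comp_continuous
      ((hc_cont.comp continuous_fst).prodMk (hc_cont.comp continuous_snd))
    exact fun p => ⟨hc_mem _, hc_mem _⟩
  have hBτ_cont : ∀ τ : ℝ, Continuous fun s => B s τ := by
    intro τ
    exact hB_cont.comp (continuous_id.prodMk continuous_const)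
  -- key identity
  have key : ∀ t ∈ Icc (0:ℝ) T,
      (∫ τ in (0:ℝ)..t, g τ) + (∫ s in (0:ℝ)..t, ∫ τ in (0:ℝ)..s, B s τ * g τ) = 0 := by
    intro t ht
    have hsub : uIcc (0:ℝ) t ⊆ Icc 0 T := by
      rw [uIcc_of_le ht.1]
      exact Icc_subset_Icc le_rfl ht.2
    have hKc : ContinuousOn (fun τ => K t τ) (Icc (0:ℝ) T) := by
      have : ContinuousOn ((fun p : ℝ × ℝ => K p.1 p.2) ∘ fun τ => (t, τ)) (Icc (0:ℝ) T) :=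
        hK.comp (continuous_const.prodMk continuous_id).continuousOn
          (fun τ hτ => ⟨ht, hτ⟩)
      exact this
    have hi₁ : IntervalIntegrable (fun τ => K t τ * x₁ τ) volume 0 t :=
      ((hKc.mul hx₁).mono hsub).intervalIntegrable
    have hi₂ : IntervalIntegrable (fun τ => K t τ * x₂ τ) volume 0 t :=
      ((hKc.mul hx₂).mono hsub).intervalIntegrable
    have hzero : (∫ τ in (0:ℝ)..t, K t τ * g τ) = 0 := by
      have hcongr : EqOn (fun τ => K t τ * g τ)
          (fun τ => K t τ * x₁ τ - K t τ * x₂ τ) (uIcc (0:ℝ) t) := by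
        intro τ hτ
        simp only [hgdef, hc_eq τ (hsub hτ)]
        ring
      rw [intervalIntegral.integral_congr hcongr,
        intervalIntegral.integral_sub hi₁ hi₂, hsol₁ t ht, hsol₂ t ht, sub_self]
    -- representation of the kernel via its derivative
    have hKrep : ∀ τ ∈ Icc (0:ℝ) t, K t τ = 1 + ∫ s in τ..t, B s τ := by
      intro τ hτ
      have hτT : τ ∈ Icc (0:ℝ) T := ⟨hτ.1, hτ.2.trans ht.2⟩
      have hsub2 : uIcc τ t ⊆ Icc (0:ℝ) T := by
        rw [uIcc_of_le hτ.2]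
        exact Icc_subset_Icc hτ.1 ht.2
      have hderiv : ∀ s ∈ uIcc τ t, HasDerivAt (fun u => K u τ) (B s τ) s := by
        intro s hs
        have hd := hKderiv s (hsub2 hs) τ hτT
        have hBe : B s τ = K' s τ := by
          simp only [hBdef]
          rw [hc_eq s (hsub2 hs), hc_eq τ hτT]
        rw [hBe]
        exact hd
      have hBint : IntervalIntegrable (fun s => B s τ) volume τ t :=
        (hBτ_cont τ).intervalIntegrable τ t
      have hftc := intervalIntegral.integral_eq_sub_of_hasDerivAt hderiv hBint
      rw [hftc, hKdiag τ hτT]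
      ring
    -- continuity of `τ ↦ ∫ s in τ..t, B s τ`
    have hIcont : Continuous fun τ => ∫ s in τ..t, B s τ := by
      have hFc : Continuous (Function.uncurry fun τ s => B s τ) := by
        have : (Function.uncurry fun τ s => B s τ)
            = (fun p : ℝ × ℝ => B p.1 p.2) ∘ Prod.swap := rfl
        rw [this]
        exact hB_cont.comp continuous_swap
      have c1 : Continuous fun τ => ∫ s in (0:ℝ)..t, B s τ :=
        intervalIntegral.continuous_parametric_intervalIntegral_of_continuous
          (μ := volume) hFc continuous_const
      have c2 : Continuous fun τ => ∫ s in (0:ℝ)..τ, B s τ :=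
        intervalIntegral.continuous_parametric_intervalIntegral_of_continuous
          (μ := volume) hFc continuous_id
      have heq : (fun τ => ∫ s in τ..t, B s τ)
          = fun τ => (∫ s in (0:ℝ)..t, B s τ) - ∫ s in (0:ℝ)..τ, B s τ := by
        funext τ
        rw [← intervalIntegral.integral_interval_sub_left
          ((hBτ_cont τ).intervalIntegrable 0 t) ((hBτ_cont τ).intervalIntegrable 0 τ)]
      rw [heq]
      exact c1.sub c2
    -- split the integral
    have hsplit : (∫ τ in (0:ℝ)..t, g τ)
        + (∫ τ in (0:ℝ)..t, (∫ s in τ..t, B s τ) * g τ) = 0 := by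
      have hcongr : EqOn (fun τ => K t τ * g τ)
          (fun τ => g τ + (∫ s in τ..t, B s τ) * g τ) (uIcc (0:ℝ) t) := by
        intro τ hτ
        have hτ' : τ ∈ Icc (0:ℝ) t := by rwa [uIcc_of_le ht.1] at hτ
        simp only
        rw [hKrep τ hτ']
        ring
      have hig : IntervalIntegrable g volume 0 t := hg_cont.intervalIntegrable 0 t
      have hiI : IntervalIntegrable (fun τ => (∫ s in τ..t, B s τ) * g τ) volume 0 t :=
        (hIcont.mul hg_cont).intervalIntegrable 0 t
      rw [← intervalIntegral.integral_add hig hiI, ← intervalIntegral.integral_congr hcongr,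
        hzero]
    -- Fubini
    have hfub : (∫ τ in (0:ℝ)..t, (∫ s in τ..t, B s τ) * g τ)
        = ∫ s in (0:ℝ)..t, ∫ τ in (0:ℝ)..s, B s τ * g τ := by
      have h1 : ∀ τ : ℝ, (∫ s in τ..t, B s τ) * g τ = ∫ s in τ..t, B s τ * g τ := by
        intro τ
        rw [intervalIntegral.integral_mul_const]
      simp only [h1]
      exact volterra_tri_swap (fun s τ => B s τ * g τ)
        (hB_cont.mul (hg_cont.comp continuous_snd)) t ht.1
    rw [← hfub]
    exact hsplit
  -- the second-kind equation
  set h : ℝ → ℝ := fun s => ∫ τ in (0:ℝ)..s, B s τ * g τ with hhdef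
  have hh_cont : Continuous h := by
    apply intervalIntegral.continuous_parametric_intervalIntegral_of_continuous
      (μ := volume) _ continuous_id
    exact hB_cont.mul (hg_cont.comp continuous_snd)
  set φ : ℝ → ℝ := fun s => g s + h s with hφdef
  have hφcont : Continuous φ := hg_cont.add hh_cont
  have hφprim : ∀ t ∈ Icc (0:ℝ) T, (∫ s in (0:ℝ)..t, φ s) = 0 := by
    intro t ht
    rw [hφdef]
    rw [intervalIntegral.integral_add (hg_cont.intervalIntegrable 0 t)
      (hh_cont.intervalIntegrable 0 t)]
    exact key t ht
  have hφ0 : ∀ s ∈ Icc (0:ℝ) T, φ s = 0 := by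
    have hIoo : EqOn φ (fun _ => (0:ℝ)) (Ioo (0:ℝ) T) := by
      intro s hs
      have hd : HasDerivAt (fun u => ∫ x in (0:ℝ)..u, φ x) (φ s) s :=
        (hφcont.integral_hasStrictDerivAt 0 s).hasDerivAt
      have hzero : (fun _ : ℝ => (0:ℝ)) =ᶠ[nhds s] fun u => ∫ x in (0:ℝ)..u, φ x := by
        filter_upwards [isOpen_Ioo.mem_nhds hs] with u hu
        exact (hφprim u (Ioo_subset_Icc_self hu)).symm
      have hd0 : HasDerivAt (fun _ : ℝ => (0:ℝ)) (φ s) s := hd.congr_of_eventuallyEq hzero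
      have := hd0.unique (hasDerivAt_const s 0)
      simpa using this
    have := hIoo.closure hφcont continuous_const
    rw [closure_Ioo hT.ne] at this
    exact this
  -- Gronwall
  obtain ⟨M, hM⟩ := (isCompact_Icc.prod isCompact_Icc :
      IsCompact (Icc (0:ℝ) T ×ˢ Icc (0:ℝ) T)).exists_bound_of_continuousOn hK'
  have hBb : ∀ s τ : ℝ, |B s τ| ≤ M := by
    intro s τ
    have := hM (c s, c τ) ⟨hc_mem s, hc_mem τ⟩
    simpa [Real.norm_eq_abs] using this
  set Z : ℝ → ℝ := fun u => ∫ τ in (0:ℝ)..u, |g τ| with hZdef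
  have hZd : ∀ u : ℝ, HasDerivAt Z (|g u|) u := by
    intro u
    exact ((hg_cont.abs).integral_hasStrictDerivAt 0 u).hasDerivAt
  have hZnn : ∀ u ∈ Icc (0:ℝ) T, 0 ≤ Z u := by
    intro u hu
    exact intervalIntegral.integral_nonneg hu.1 (fun τ _ => abs_nonneg _)
  have hgb : ∀ u ∈ Icc (0:ℝ) T, |g u| ≤ M * Z u := by
    intro u hu
    have hφu : g u + h u = 0 := hφ0 u hu
    have hgu : g u = -h u := by linarith
    rw [hgu, abs_neg, hhdef]
    have hint1 : IntervalIntegrable (fun τ => |B u τ * g τ|) volume 0 u :=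
      ((hB_cont.mul (hg_cont.comp continuous_snd)).comp
        (continuous_const.prodMk continuous_id)).abs.intervalIntegrable 0 u
    have hint2 : IntervalIntegrable (fun τ => M * |g τ|) volume 0 u :=
      (continuous_const.mul hg_cont.abs).intervalIntegrable 0 u
    calc |∫ τ in (0:ℝ)..u, B u τ * g τ| ≤ ∫ τ in (0:ℝ)..u, |B u τ * g τ| :=
          intervalIntegral.abs_integral_le_integral_abs hu.1
      _ ≤ ∫ τ in (0:ℝ)..u, M * |g τ| := by
          apply intervalIntegral.integral_mono_on hu.1 hint1 hint2
          intro τ _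
          rw [abs_mul]
          exact mul_le_mul_of_nonneg_right (hBb u τ) (abs_nonneg _)
      _ = M * Z u := by rw [hZdef, intervalIntegral.integral_const_mul]
  have hZcont : ContinuousOn Z (Icc (0:ℝ) T) := by
    apply Continuous.continuousOn
    rw [continuous_iff_continuousAt]
    exact fun u => (hZd u).continuousAt
  have hZ0 : Z 0 = 0 := intervalIntegral.integral_same
  have hZle : ∀ u ∈ Icc (0:ℝ) T, ‖Z u‖ ≤ gronwallBound 0 M 0 (u - 0) := by
    apply norm_le_gronwallBound_of_norm_deriv_right_le hZcont
      (fun u _ => (hZd u).hasDerivWithinAt)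
    · simp [hZ0]
    · intro u hu
      have hu' : u ∈ Icc (0:ℝ) T := Ico_subset_Icc_self hu
      rw [Real.norm_eq_abs, Real.norm_eq_abs, abs_abs, abs_of_nonneg (hZnn u hu')]
      have := hgb u hu'
      linarith
  have hZzero : ∀ u ∈ Icc (0:ℝ) T, Z u = 0 := by
    intro u hu
    have h1 := hZle u hu
    rw [gronwallBound_ε0, zero_mul, Real.norm_eq_abs,
      abs_of_nonneg (hZnn u hu)] at h1
    exact le_antisymm h1 (hZnn u hu)
  have hgzero : ∀ u ∈ Icc (0:ℝ) T, g u = 0 := by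
    intro u hu
    have h1 := hgb u hu
    rw [hZzero u hu, mul_zero] at h1
    exact abs_eq_zero.mp (le_antisymm h1 (abs_nonneg _))
  intro t ht
  have := hgzero t ht
  rw [hgdef] at this
  simp only [hc_eq t ht] at this
  linarith [this]
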